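/- Let (E,d) be a metric space, let α > 0 be a countable ordinal, and let p be a natural number. Suppose that every compact countable subset K̃ of E with Cantor–Bendixson characteristic (α,1) is homeomorphic to the ordinal ω^α + 1 with its order topology. Then every compact countable subset K of E with Cantor–Bendixson characteristic (α,p) is homeomorphic to the ordinal ω^α·p + 1 with its order topology. -/

import Mathlib

open Ordinal Set

/-- The `α`-th Cantor–Bendixson derivative of a set `A`, defined by transfinite
recursion: `A^(0) = A`, `A^(β+1) = (A^(β))'` (derived set in the ambient space),
and `A^(λ) = ⋂_{γ<λ} A^(γ)` at nonzero limit ordinals. -/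
noncomputable def cbDeriv {X : Type*} [TopologicalSpace X] (A : Set X) (o : Ordinal) : Set X :=
  Ordinal.limitRecOn o A (fun _ ih => derivedSet ih)
    (fun o _ ih => ⋂ (β : Ordinal) (h : β < o), ih β h)

/-- `A` has Cantor–Bendixson characteristic `(α, p)`: `α` is the least ordinal such
that the `α`-th Cantor–Bendixson derivative of `A` is finite, and that derivative has
exactly `p` elements. -/
def HasCBChar {X : Type*} [TopologicalSpace X] (A : Set X) (α : Ordinal) (p : ℕ) : Prop :=
  (cbDeriv A α).Finite ∧ (∀ β < α, ¬ (cbDeriv A β).Finite) ∧ (cbDeriv A α).ncard = p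

section CBLemmas

open Filter Topology

variable {X : Type*} [TopologicalSpace X]

lemma cbDeriv_zero (A : Set X) : cbDeriv A 0 = A :=
  Ordinal.limitRecOn_zero _ _ _

lemma cbDeriv_succ (A : Set X) (o : Ordinal) :
    cbDeriv A (Order.succ o) = derivedSet (cbDeriv A o) :=
  Ordinal.limitRecOn_succ _ _ _ _

lemma cbDeriv_limit (A : Set X) {o : Ordinal} (ho : Order.IsSuccLimit o) :
    cbDeriv A o = ⋂ (β : Ordinal) (_ : β < o), cbDeriv A β :=
  Ordinal.limitRecOn_limit _ _ _ _ ho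

variable [T1Space X]

lemma cbDeriv_isClosed {A : Set X} (hA : IsClosed A) (o : Ordinal) :
    IsClosed (cbDeriv A o) := by
  induction o using Ordinal.limitRecOn with
  | zero => rwa [cbDeriv_zero]
  | add_one o ih => rw [Ordinal.add_one_eq_succ, cbDeriv_succ]; exact isClosed_derivedSet _
  | limit o ho ih =>
      rw [cbDeriv_limit A ho]
      exact isClosed_biInter fun β hβ => ih β hβ

lemma cbDeriv_anti {A : Set X} (hA : IsClosed A) :
    ∀ {o β : Ordinal}, β ≤ o → cbDeriv A o ⊆ cbDeriv A β := by
  intro o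
  induction o using Ordinal.limitRecOn with
  | zero => intro β hβ; rw [nonpos_iff_eq_zero.mp hβ]
  | add_one o ih =>
      rw [Ordinal.add_one_eq_succ]
      intro β hβ
      rcases eq_or_lt_of_le hβ with h | h
      · rw [h]
      · have h1 : cbDeriv A (Order.succ o) ⊆ cbDeriv A o := by
          rw [cbDeriv_succ]
          exact (isClosed_iff_derivedSet_subset _).mp (cbDeriv_isClosed hA o)
        exact h1.trans (ih (Order.lt_succ_iff.mp h))
  | limit o ho ih =>
      intro β hβ
      rcases eq_or_lt_of_le hβ with h | h
      · rw [h]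
      · rw [cbDeriv_limit A ho]
        exact iInter₂_subset β h

lemma cbDeriv_subset {A : Set X} (hA : IsClosed A) (o : Ordinal) : cbDeriv A o ⊆ A := by
  have := cbDeriv_anti hA (show (0:Ordinal) ≤ o by simp)
  rwa [cbDeriv_zero] at this

lemma cbDeriv_union {A B : Set X} (hA : IsClosed A) (hB : IsClosed B) (o : Ordinal) :
    cbDeriv (A ∪ B) o = cbDeriv A o ∪ cbDeriv B o := by
  induction o using Ordinal.limitRecOn with
  | zero => rw [cbDeriv_zero, cbDeriv_zero, cbDeriv_zero]
  | add_one o ih => rw [Ordinal.add_one_eq_succ, cbDeriv_succ, cbDeriv_succ, cbDeriv_succ, ih, derivedSet_union]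
  | limit o ho ih =>
      ext x
      rw [cbDeriv_limit _ ho]
      simp only [mem_iInter, mem_union]
      constructor
      · intro h
        by_contra hc
        push_neg at hc
        obtain ⟨hcA, hcB⟩ := hc
        rw [cbDeriv_limit A ho] at hcA
        rw [cbDeriv_limit B ho] at hcB
        simp only [mem_iInter, not_forall] at hcA hcB
        obtain ⟨β₁, hβ₁, hxA⟩ := hcA
        obtain ⟨β₂, hβ₂, hxB⟩ := hcB
        have hβ : max β₁ β₂ < o := max_lt hβ₁ hβ₂
        have := h (max β₁ β₂) hβ
        rw [ih _ hβ] at this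
        rcases this with h' | h'
        · exact hxA (cbDeriv_anti hA (le_max_left _ _) h')
        · exact hxB (cbDeriv_anti hB (le_max_right _ _) h')
      · intro h β hβ
        rw [ih β hβ]
        rcases h with h | h
        · exact Or.inl (cbDeriv_anti hA hβ.le h)
        · exact Or.inr (cbDeriv_anti hB hβ.le h)

lemma derivedSet_of_finite {A : Set X} (hA : A.Finite) : derivedSet A = ∅ := by
  ext x
  simp only [mem_derivedSet, mem_empty_iff_false, iff_false]
  rw [accPt_principal_iff_clusterPt]
  intro h
  have hcl : IsClosed (A \ {x}) := hA.diff.isClosed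
  have hmem : (A \ {x})ᶜ ∈ 𝓝 x := hcl.isOpen_compl.mem_nhds (by simp)
  have := (clusterPt_principal_iff.mp h) _ hmem
  simp [Set.Nonempty] at this

lemma cbDeriv_nonempty {K : Set X} [T2Space X] (hK : IsCompact K) {α : Ordinal} (hα : 0 < α)
    (h : ∀ β < α, ¬ (cbDeriv K β).Finite) : (cbDeriv K α).Nonempty := by
  induction α using Ordinal.limitRecOn with
  | zero => exact absurd hα (lt_irrefl _)
  | add_one o ih =>
      rw [Ordinal.add_one_eq_succ] at h ⊢
      have hinf : (cbDeriv K o).Infinite := h o (Order.lt_succ o)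
      have hsub : cbDeriv K o ⊆ K := cbDeriv_subset hK.isClosed o
      obtain ⟨x, -, hx⟩ := hinf.exists_accPt_of_subset_isCompact hK hsub
      rw [cbDeriv_succ]
      exact ⟨x, hx⟩
  | limit o ho ih =>
      have : Nonempty {β : Ordinal // β < o} := ⟨⟨0, ho.pos⟩⟩
      have hne : (⋂ β : {β : Ordinal // β < o}, cbDeriv K β.1).Nonempty := by
        apply IsCompact.nonempty_iInter_of_directed_nonempty_isCompact_isClosed
        · intro i j
          refine ⟨⟨max i.1 j.1, max_lt i.2 j.2⟩, ?_, ?_⟩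
          · exact cbDeriv_anti hK.isClosed (le_max_left _ _)
          · exact cbDeriv_anti hK.isClosed (le_max_right _ _)
        · intro i
          exact Set.Infinite.nonempty (h i.1 i.2)
        · intro i
          exact hK.of_isClosed_subset (cbDeriv_isClosed hK.isClosed i.1)
            (cbDeriv_subset hK.isClosed i.1)
        · intro i
          exact cbDeriv_isClosed hK.isClosed i.1
      rw [cbDeriv_limit K ho]
      rwa [Set.iInter_subtype] at hne

end CBLemmas


section SepLemmas

open Filter Topology

/-- choose a radius avoiding all distances realized in `K`. -/
lemma exists_good_radius {E : Type*} [MetricSpace E] {K : Set E} (hKc : K.Countable)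
    (x : E) {d : ℝ} (hd : 0 < d) :
    ∃ r, 0 < r ∧ r < d ∧ ∀ z ∈ K, dist z x ≠ r := by
  have hS : ((fun z => dist z x) '' K).Countable := hKc.image _
  have hIoo : ¬ (Set.Ioo (0:ℝ) d).Countable := by
    rw [← Cardinal.le_aleph0_iff_set_countable, Cardinal.mk_Ioo_real hd]
    exact (Cardinal.aleph0_lt_continuum).not_ge
  have : ¬ Set.Ioo (0:ℝ) d ⊆ (fun z => dist z x) '' K := fun hsub => hIoo (hS.mono hsub)
  obtain ⟨r, hr, hrS⟩ := Set.not_subset.mp this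
  exact ⟨r, hr.1, hr.2, fun z hz h => hrS ⟨z, hz, h⟩⟩

/-- In a countable metric space, a point can be separated from another point by a
partition of a closed set `K` into two closed pieces. -/
lemma sep_pair {E : Type*} [MetricSpace E] {K : Set E} (hKc : K.Countable)
    (hKcl : IsClosed K) {x y : E} (hxy : y ≠ x) :
    ∃ U V : Set E, U ∪ V = K ∧ Disjoint U V ∧ IsClosed U ∧ IsClosed V ∧
      (x ∈ K → x ∈ U) ∧ (y ∈ K → y ∈ V) := by
  have hd : 0 < dist y x := dist_pos.mpr hxy
  obtain ⟨r, hr0, hrd, hr⟩ := exists_good_radius hKc x hd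
  refine ⟨K ∩ Metric.closedBall x r, K ∩ (Metric.ball x r)ᶜ, ?_, ?_, ?_, ?_, ?_, ?_⟩
  · rw [← Set.inter_union_distrib_left]
    have : Metric.closedBall x r ∪ (Metric.ball x r)ᶜ = Set.univ := by
      apply Set.eq_univ_of_forall
      intro z
      rcases le_or_gt (dist z x) r with h | h
      · exact Or.inl h
      · exact Or.inr fun hz => absurd (Metric.mem_ball.mp hz) (not_lt.mpr h.le)
    rw [this, Set.inter_univ]
  · rw [Set.disjoint_left]
    rintro z ⟨hzK, hz1⟩ ⟨-, hz2⟩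
    have h1 : dist z x ≤ r := Metric.mem_closedBall.mp hz1
    have h2 : ¬ dist z x < r := fun h => hz2 (Metric.mem_ball.mp h |> fun _ => h)
    exact hr z hzK (le_antisymm h1 (not_lt.mp h2))
  · exact hKcl.inter Metric.isClosed_closedBall
  · exact hKcl.inter (Metric.isOpen_ball.isClosed_compl)
  · exact fun hK => ⟨hK, Metric.mem_closedBall_self hr0.le⟩
  · intro hK
    refine ⟨hK, fun hy => ?_⟩
    exact absurd (Metric.mem_ball.mp hy) (not_lt.mpr hrd.le)

/-- Separation of a point from a finite set, within a countable closed set `K`,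
by a partition into two pieces closed in the ambient space. -/
lemma sep_finite {E : Type*} [MetricSpace E] {K : Set E} (hKc : K.Countable)
    (hKcl : IsClosed K) (x : E) {F : Set E} (hF : F.Finite) :
    x ∉ F →
    ∃ U V : Set E, U ∪ V = K ∧ Disjoint U V ∧ IsClosed U ∧ IsClosed V ∧
      (x ∈ K → x ∈ U) ∧ ∀ y ∈ F, y ∈ K → y ∈ V := by
  induction F, hF using Set.Finite.induction_on with
  | empty =>
      intro _
      exact ⟨K, ∅, Set.union_empty K, Set.disjoint_empty _, hKcl, isClosed_empty,
        fun h => h, by simp⟩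
  | insert haF hFfin ih =>
      rename_i a F
      intro hx
      have hxa : a ≠ x := fun h => hx (h ▸ Set.mem_insert _ _)
      have hxF : x ∉ F := fun h => hx (Set.mem_insert_of_mem _ h)
      obtain ⟨U, V, hUV, hdis, hUcl, hVcl, hxU, hFV⟩ := ih hxF
      obtain ⟨U', V', hUV', hdis', hUcl', hVcl', hxU', haV'⟩ := sep_pair hKc hKcl hxa
      refine ⟨U ∩ U', V ∪ V', ?_, ?_, hUcl.inter hUcl', hVcl.union hVcl', ?_, ?_⟩
      · apply Set.Subset.antisymm
        · apply Set.union_subset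
          · exact (Set.inter_subset_left).trans (hUV ▸ Set.subset_union_left)
          · apply Set.union_subset
            · exact (hUV ▸ Set.subset_union_right)
            · exact (hUV' ▸ Set.subset_union_right)
        · intro z hz
          by_cases hzV : z ∈ V
          · exact Or.inr (Or.inl hzV)
          by_cases hzV' : z ∈ V'
          · exact Or.inr (Or.inr hzV')
          · have hzU : z ∈ U := by
              have := hUV ▸ hz
              rcases this with h | h
              · exact h
              · exact absurd h hzV
            have hzU' : z ∈ U' := by
              have := hUV' ▸ hz
              rcases this with h | h
              · exact h
              · exact absurd h hzV'
            exact Or.inl ⟨hzU, hzU'⟩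
      · apply Set.disjoint_union_right.mpr
        exact ⟨hdis.mono_left Set.inter_subset_left, hdis'.mono_left Set.inter_subset_right⟩
      · exact fun h => ⟨hxU h, hxU' h⟩
      · intro y hy hyK
        rcases Set.mem_insert_iff.mp hy with h | h
        · subst h; exact Or.inr (haV' hyK)
        · exact Or.inl (hFV y h hyK)

end SepLemmas

section PieceLemmas

open Filter Topology

/-- If a closed set splits as a disjoint union of closed pieces, the CB derivative of
the union restricted to a piece is the CB derivative of that piece. -/
lemma cbDeriv_inter_piece {X : Type*} [TopologicalSpace X] [T1Space X]
    {U V : Set X} (hU : IsClosed U) (hV : IsClosed V) (hdis : Disjoint U V) (o : Ordinal) :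
    cbDeriv (U ∪ V) o ∩ U = cbDeriv U o := by
  rw [cbDeriv_union hU hV]
  rw [Set.union_inter_distrib_right]
  have h1 : cbDeriv U o ∩ U = cbDeriv U o :=
    Set.inter_eq_self_of_subset_left (cbDeriv_subset hU o)
  have h2 : cbDeriv V o ∩ U = ∅ := by
    apply Set.eq_empty_of_subset_empty
    intro z ⟨hzV, hzU⟩
    exact (Set.disjoint_left.mp hdis hzU (cbDeriv_subset hV o hzV)).elim
  rw [h1, h2, Set.union_empty]

/-- A closed piece of a disjoint decomposition inherits a CB characteristic. -/
lemma hasCBChar_piece {X : Type*} [TopologicalSpace X] [T1Space X]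
    {U V : Set X} (hU : IsClosed U) (hV : IsClosed V) (hdis : Disjoint U V)
    {α : Ordinal} {p : ℕ} (hchar : HasCBChar (U ∪ V) α p)
    (hne : (cbDeriv (U ∪ V) α ∩ U).Nonempty) :
    HasCBChar U α (cbDeriv (U ∪ V) α ∩ U).ncard := by
  have hkey : cbDeriv (U ∪ V) α ∩ U = cbDeriv U α := cbDeriv_inter_piece hU hV hdis α
  obtain ⟨hfin, hinf, hcard⟩ := hchar
  refine ⟨hkey ▸ (hfin.inter_of_left U), ?_, by rw [hkey]⟩
  intro β hβ hβfin
  have hsucc : cbDeriv U (Order.succ β) = ∅ := by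
    rw [cbDeriv_succ]
    exact derivedSet_of_finite hβfin
  have hle : Order.succ β ≤ α := Order.succ_le_of_lt hβ
  have : cbDeriv U α ⊆ (∅ : Set X) := hsucc ▸ cbDeriv_anti hU hle
  rw [hkey] at hne
  exact absurd (this hne.choose_spec) (Set.notMem_empty _)

/-- A disjoint union of two compact sets is homeomorphic to the topological sum. -/
lemma homeo_sum {X : Type*} [TopologicalSpace X] [T2Space X] {U V : Set X}
    (hU : IsCompact U) (hV : IsCompact V) (hdis : Disjoint U V) :
    Nonempty (↥U ⊕ ↥V ≃ₜ ↥(U ∪ V)) := by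
  haveI : CompactSpace ↥U := isCompact_iff_compactSpace.mp hU
  haveI : CompactSpace ↥V := isCompact_iff_compactSpace.mp hV
  let f : ↥U ⊕ ↥V → ↥(U ∪ V) :=
    Sum.elim (Set.inclusion Set.subset_union_left) (Set.inclusion Set.subset_union_right)
  have hcont : Continuous f := Continuous.sumElim
    (continuous_inclusion _) (continuous_inclusion _)
  have hbij : Function.Bijective f := by
    constructor
    · rintro (a | a) (b | b) hab
      · have h' := congrArg Subtype.val hab
        have h : (a : X) = (b : X) := h'
        exact congrArg Sum.inl (Subtype.ext h)
      · exfalso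
        have h' := congrArg Subtype.val hab
        have h : (a : X) = (b : X) := h'
        exact Set.disjoint_left.mp hdis a.2 (by rw [h]; exact b.2)
      · exfalso
        have h' := congrArg Subtype.val hab
        have h : (a : X) = (b : X) := h'
        exact Set.disjoint_left.mp hdis (by rw [h]; exact b.2) a.2
      · have h' := congrArg Subtype.val hab
        have h : (a : X) = (b : X) := h'
        exact congrArg Sum.inr (Subtype.ext h)
    · rintro ⟨z, hz | hz⟩
      · exact ⟨Sum.inl ⟨z, hz⟩, rfl⟩
      · exact ⟨Sum.inr ⟨z, hz⟩, rfl⟩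
  exact ⟨(Continuous.homeoOfEquivCompactToT2 (f := Equiv.ofBijective f hbij) hcont)⟩

/-- Splitting an initial segment of ordinals. -/
lemma ord_sum (a b : Ordinal) (hb : 1 + b = b) :
    Nonempty (↥(Set.Iic a) ⊕ ↥(Set.Iic b) ≃ₜ ↥(Set.Iic (a + b))) := by
  haveI : CompactSpace ↥(Set.Iic a) := isCompact_iff_compactSpace.mp
    (by rw [← Set.Icc_bot]; exact isCompact_Icc)
  haveI : CompactSpace ↥(Set.Iic b) := isCompact_iff_compactSpace.mp
    (by rw [← Set.Icc_bot]; exact isCompact_Icc)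
  have hcont_add : Continuous (fun z : Ordinal => a + 1 + z) :=
    (Order.isNormal_iff_strictMono_and_continuous.mp (Ordinal.isNormal_add_right _)).2
  let f : ↥(Set.Iic a) ⊕ ↥(Set.Iic b) → ↥(Set.Iic (a + b)) :=
    Sum.elim (fun x => ⟨x.1, x.2.trans (le_self_add (a := a) (b := b))⟩)
      (fun y => ⟨a + 1 + y.1, by
        calc a + 1 + y.1 ≤ a + 1 + b := add_le_add_right y.2 _
        _ = a + (1 + b) := by rw [add_assoc]
        _ = a + b := by rw [hb]⟩)
  have hlt : ∀ y : Ordinal, a < a + 1 + y := by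
    intro y
    calc a < a + 1 := by rw [Ordinal.add_one_eq_succ]; exact Order.lt_succ a
    _ ≤ a + 1 + y := le_self_add
  have hcont : Continuous f := by
    apply Continuous.sumElim
    · exact Continuous.subtype_mk continuous_subtype_val _
    · exact Continuous.subtype_mk (hcont_add.comp continuous_subtype_val) _
  have hbij : Function.Bijective f := by
    constructor
    · rintro (x | x) (y | y) hxy
      · have h' := congrArg Subtype.val hxy
        have h : (x.1 : Ordinal) = (y.1 : Ordinal) := h'
        exact congrArg Sum.inl (Subtype.ext h)
      · exfalso
        have h' := congrArg Subtype.val hxy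
        have h : (x.1 : Ordinal) = a + 1 + y.1 := h'
        exact absurd (le_of_eq h.symm |>.trans x.2) (not_le.mpr (hlt y.1))
      · exfalso
        have h' := congrArg Subtype.val hxy
        have h : a + 1 + x.1 = (y.1 : Ordinal) := h'
        exact absurd (le_of_eq h |>.trans y.2) (not_le.mpr (hlt x.1))
      · refine congrArg Sum.inr (Subtype.ext ?_)
        have h' := congrArg Subtype.val hxy
        have h : a + 1 + x.1 = a + 1 + y.1 := h'
        exact (Ordinal.isNormal_add_right (a+1)).strictMono.injective h
    · rintro ⟨z, hz⟩
      rcases le_or_gt z a with h | h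
      · exact ⟨Sum.inl ⟨z, h⟩, rfl⟩
      · have h1 : a + 1 ≤ z := by
          rw [Ordinal.add_one_eq_succ]; exact Order.succ_le_of_lt h
        have h2 : a + 1 + (z - (a + 1)) = z := Ordinal.add_sub_cancel_of_le h1
        have h3 : z - (a + 1) ≤ b := by
          rw [← add_le_add_iff_left (a + 1), h2, add_assoc, hb]
          exact hz
        exact ⟨Sum.inr ⟨z - (a + 1), h3⟩, Subtype.ext h2⟩
  exact ⟨(Continuous.homeoOfEquivCompactToT2 (f := Equiv.ofBijective f hbij) hcont)⟩

end PieceLemmas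

theorem stmt4 {E : Type*} [MetricSpace E] (α : Ordinal) (hα : 0 < α) (hαcount : α < ω_ 1)
    (p : ℕ)
    (H : ∀ K' : Set E, IsCompact K' → K'.Countable → HasCBChar K' α 1 →
      Nonempty (↥K' ≃ₜ ↥(Set.Iic (ω ^ α))))
    (K : Set E) (hK : IsCompact K) (hKcount : K.Countable) (hchar : HasCBChar K α p) :
    Nonempty (↥K ≃ₜ ↥(Set.Iic (ω ^ α * (p : Ordinal)))) := by
  induction p generalizing K with
  | zero =>
      exfalso
      have hne := cbDeriv_nonempty hK hα hchar.2.1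
      have hempty : cbDeriv K α = ∅ := by
        rw [← Set.ncard_eq_zero hchar.1]
        exact hchar.2.2
      rw [hempty] at hne
      exact Set.not_nonempty_empty hne
  | succ q ih =>
      rcases Nat.eq_zero_or_pos q with hq | hq
      · subst hq
        obtain ⟨e⟩ := H K hK hKcount hchar
        have heq : Set.Iic (ω ^ α) = Set.Iic (ω ^ α * ((0 + 1 : ℕ) : Ordinal)) := by
          norm_num
        exact ⟨e.trans (Homeomorph.setCongr heq)⟩
      · have hKcl : IsClosed K := hK.isClosed
        have hfin : (cbDeriv K α).Finite := hchar.1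
        have hcard : (cbDeriv K α).ncard = q + 1 := hchar.2.2
        have hDne : (cbDeriv K α).Nonempty :=
          (Set.ncard_pos hfin).mp (by rw [hcard]; exact Nat.succ_pos q)
        obtain ⟨x, hx⟩ := hDne
        have hFfin : (cbDeriv K α \ {x}).Finite := hfin.diff
        have hxF : x ∉ cbDeriv K α \ {x} := by simp
        obtain ⟨U, V, hUV, hdis, hUcl, hVcl, hxU, hFV⟩ :=
          sep_finite hKcount hKcl x hFfin hxF
        have hDsub : cbDeriv K α ⊆ K := cbDeriv_subset hKcl α
        have hxK : x ∈ K := hDsub hx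
        have hxU' : x ∈ U := hxU hxK
        have hchar' : HasCBChar (U ∪ V) α (q + 1) := by rwa [hUV]
        have hDU : cbDeriv K α ∩ U = {x} := by
          apply Set.Subset.antisymm
          · rintro z ⟨hzD, hzU⟩
            by_contra hzx
            have hzF : z ∈ cbDeriv K α \ {x} := ⟨hzD, hzx⟩
            have hzV : z ∈ V := hFV z hzF (hDsub hzD)
            exact Set.disjoint_left.mp hdis hzU hzV
          · rintro z rfl
            exact ⟨hx, hxU'⟩
        have hDV : cbDeriv K α ∩ V = cbDeriv K α \ {x} := by
          apply Set.Subset.antisymm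
          · rintro z ⟨hzD, hzV⟩
            refine ⟨hzD, fun hzx => ?_⟩
            rw [Set.mem_singleton_iff] at hzx
            subst hzx
            exact Set.disjoint_left.mp hdis hxU' hzV
          · rintro z hz
            exact ⟨hz.1, hFV z hz (hDsub hz.1)⟩
        have hFcard : (cbDeriv K α \ {x}).ncard = q := by
          rw [Set.ncard_diff_singleton_of_mem hx, hcard]; omega
        have hFne : (cbDeriv K α \ {x}).Nonempty :=
          (Set.ncard_pos hFfin).mp (by rw [hFcard]; exact hq)
        -- characteristics of the pieces
        have hne1 : (cbDeriv (U ∪ V) α ∩ U).Nonempty := by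
          rw [hUV, hDU]; exact ⟨x, rfl⟩
        have h1 := hasCBChar_piece hUcl hVcl hdis hchar' hne1
        have hcharU : HasCBChar U α 1 := by
          rwa [hUV, hDU, Set.ncard_singleton] at h1
        have hchar'' : HasCBChar (V ∪ U) α (q + 1) := by
          rwa [Set.union_comm]
        have hne2 : (cbDeriv (V ∪ U) α ∩ V).Nonempty := by
          rwa [Set.union_comm, hUV, hDV]
        have h2 := hasCBChar_piece hVcl hUcl hdis.symm hchar'' hne2
        have hcharV : HasCBChar V α q := by
          rwa [Set.union_comm, hUV, hDV, hFcard] at h2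
        -- compactness and countability of the pieces
        have hUsub : U ⊆ K := hUV ▸ Set.subset_union_left
        have hVsub : V ⊆ K := hUV ▸ Set.subset_union_right
        have hUcomp : IsCompact U := hK.of_isClosed_subset hUcl hUsub
        have hVcomp : IsCompact V := hK.of_isClosed_subset hVcl hVsub
        obtain ⟨eU⟩ := H U hUcomp (hKcount.mono hUsub) hcharU
        obtain ⟨eV⟩ := ih V hVcomp (hKcount.mono hVsub) hcharV
        obtain ⟨esum⟩ := homeo_sum hUcomp hVcomp hdis
        -- ordinal side
        have h1α : 1 ≤ α := Order.one_le_iff_pos.mpr hα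
        have hω : ω ≤ ω ^ α := by
          calc ω = ω ^ (1 : Ordinal) := (Ordinal.opow_one ω).symm
          _ ≤ ω ^ α := Ordinal.opow_le_opow_right Ordinal.omega0_pos h1α
        have hqpos : (0 : Ordinal) < (q : Ordinal) := by exact_mod_cast hq
        have hb : 1 + ω ^ α * (q : Ordinal) = ω ^ α * (q : Ordinal) :=
          Ordinal.one_add_of_omega0_le (hω.trans (Ordinal.le_mul_left _ hqpos))
        obtain ⟨eord⟩ := ord_sum (ω ^ α) (ω ^ α * (q : Ordinal)) hb
        have hord : ω ^ α + ω ^ α * (q : Ordinal) = ω ^ α * ((q + 1 : ℕ) : Ordinal) := by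
          have hc : ((q + 1 : ℕ) : Ordinal) = 1 + (q : Ordinal) := by
            push_cast
            have : (1 : Ordinal) + (q : Ordinal) = ((1 + q : ℕ) : Ordinal) := by push_cast; ring_nf
            rw [this]
            norm_cast
            omega
          rw [hc, mul_add, mul_one]
        have e0 : ↥K ≃ₜ ↥(U ∪ V) := Homeomorph.setCongr hUV.symm
        have efin : ↥(Set.Iic (ω ^ α + ω ^ α * (q : Ordinal))) ≃ₜ
            ↥(Set.Iic (ω ^ α * ((q + 1 : ℕ) : Ordinal))) :=
          Homeomorph.setCongr (by rw [hord])
        exact ⟨e0.trans (esum.symm.trans ((eU.sumCongr eV).trans (eord.trans efin)))⟩
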